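/- Let e_1 ≤ ⋯ ≤ e_k be integers and Γ(\vec{e}) the associated k-staircase Young diagram (n-th column has h_{\vec{e}}(n) boxes). Then the number of boxes of Γ(\vec{e}) with hook length strictly less than k equals u(\vec{e}) = ∑_{e_i < e_j} (e_j − e_i − 1). -/

import Mathlib

/-- The hook length of a box `c = (r, col)` of a Young diagram. -/
def hookLength (Y : YoungDiagram) (c : ℕ × ℕ) : ℕ :=
  (Y.rowLen c.1 - c.2) + (Y.colLen c.2 - c.1) - 1


def kstEE (k : ℕ) (e : Fin k → ℤ) : ℤ := ∑ j, e j
def kstT (k : ℕ) (e : Fin k → ℤ) (j : Fin k) : ℤ := kstEE k e - k * (e j + 1) + ((j : ℕ) + 1)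
def kstNB (k : ℕ) (e : Fin k → ℤ) (y : ℤ) : ℤ := ∑ j, max 0 ((kstT k e j - y + k - 1) / k)
def kstD (k : ℕ) (e : Fin k → ℤ) (x : ℤ) : Prop := ∃ (j : Fin k) (s : ℕ), x = kstT k e j - k * s
def kstC (k : ℕ) (e : Fin k → ℤ) (m : ℤ) : ℤ := kstEE k e + k * (m + 1)

lemma ediv_kqr {K : ℤ} (hK : 0 < K) (q ρ : ℤ) (h0 : 0 ≤ ρ) (h1 : ρ < K) :
    (K * q + ρ) / K = q := by
  rw [add_comm, Int.add_mul_ediv_left _ _ (ne_of_gt hK), Int.ediv_eq_zero_of_lt h0 h1, zero_add]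

section basics
variable {k : ℕ} (e : Fin k → ℤ)

lemma kstNB_nonneg (y : ℤ) : 0 ≤ kstNB k e y :=
  Finset.sum_nonneg fun _ _ => le_max_left _ _

lemma kstNB_antitone (hk : 0 < k) {y y' : ℤ} (h : y ≤ y') : kstNB k e y' ≤ kstNB k e y := by
  apply Finset.sum_le_sum
  intro j _
  exact max_le_max le_rfl (Int.ediv_le_ediv (by exact_mod_cast hk) (by omega))

lemma kstNB_eq_zero (hk : 0 < k) {y : ℤ} (h : ∀ j, kstT k e j ≤ y) : kstNB k e y = 0 := by
  apply Finset.sum_eq_zero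
  intro j _
  have hkz : (0:ℤ) < k := by exact_mod_cast hk
  have h1 : (kstT k e j - y + k - 1) / k ≤ 0 := by
    have hle : (kstT k e j - y + k - 1) ≤ ((k:ℤ) * 0 + (k - 1)) := by have := h j; omega
    calc (kstT k e j - y + k - 1) / k ≤ ((k:ℤ) * 0 + (k - 1)) / k :=
          Int.ediv_le_ediv hkz hle
      _ = 0 := ediv_kqr hkz 0 _ (by omega) (by omega)
  simp [max_eq_left h1]

lemma kst_hermite (hk : 0 < k) (v : ℤ) : ∑ j ∈ Finset.range k, (v + j) / k = v := by
  have hkz : ((k:ℤ)) ≠ 0 := by positivity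
  induction v using Int.induction_on with
  | zero =>
    apply Finset.sum_eq_zero
    intro j hj
    simp only [Finset.mem_range] at hj
    rw [zero_add]
    exact Int.ediv_eq_zero_of_lt (by positivity) (by exact_mod_cast hj)
  | succ n ih =>
    have h0 : ∀ j : ℕ, ((n:ℤ) + 1 + j) = (n + (j+1 : ℕ)) := by intro j; push_cast; ring
    calc ∑ j ∈ Finset.range k, ((n:ℤ) + 1 + j) / k
        = ∑ j ∈ Finset.range k, ((n:ℤ) + (j+1:ℕ)) / k := by
          apply Finset.sum_congr rfl; intro j _; rw [h0 j]
      _ = (∑ j ∈ Finset.range (k+1), ((n:ℤ) + j) / k) - ((n:ℤ) + (0:ℕ)) / k := by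
          rw [Finset.sum_range_succ']; push_cast; ring
      _ = (∑ j ∈ Finset.range k, ((n:ℤ) + j) / k) + ((n:ℤ) + k) / k - (n:ℤ) / k := by
          rw [Finset.sum_range_succ]; push_cast; ring
      _ = (n:ℤ) + 1 := by
          have h2 : ((n:ℤ) + k) / k = (n:ℤ)/k + 1 := by
            rw [show (n:ℤ) + k = n + k * 1 by ring, Int.add_mul_ediv_left _ _ hkz]
          rw [ih, h2]; ring
  | pred n ih =>
    have key : ∑ j ∈ Finset.range k, (-(n:ℤ) - 1 + j) / k
        = (∑ j ∈ Finset.range k, (-(n:ℤ) + j) / k) - 1 := by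
      calc ∑ j ∈ Finset.range k, (-(n:ℤ) - 1 + j) / k
          = (∑ j ∈ Finset.range (k+1), (-(n:ℤ) - 1 + j) / k) - (-(n:ℤ) - 1 + k)/k := by
            rw [Finset.sum_range_succ]; push_cast; ring
        _ = (∑ j ∈ Finset.range k, (-(n:ℤ) - 1 + (j+1:ℕ)) / k) + (-(n:ℤ) - 1 + (0:ℕ))/k - (-(n:ℤ) - 1 + k)/k := by
            rw [Finset.sum_range_succ']
        _ = (∑ j ∈ Finset.range k, (-(n:ℤ) + j) / k) + (-(n:ℤ) - 1)/k - (-(n:ℤ) - 1 + k)/k := by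
            have e1 : ∑ j ∈ Finset.range k, (-(n:ℤ) - 1 + (j+1:ℕ)) / k
                = ∑ j ∈ Finset.range k, (-(n:ℤ) + j) / k := by
              apply Finset.sum_congr rfl; intro j _; congr 1; push_cast; ring
            have e2 : (-(n:ℤ) - 1 + (0:ℕ)) = -(n:ℤ) - 1 := by push_cast; ring
            rw [e1, e2]
        _ = (∑ j ∈ Finset.range k, (-(n:ℤ) + j) / k) - 1 := by
            have h2 : (-(n:ℤ) - 1 + k) / k = (-(n:ℤ)-1)/k + 1 := by
              rw [show -(n:ℤ) - 1 + k = -(n:ℤ) - 1 + k * 1 by ring,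
                Int.add_mul_ediv_left _ _ hkz]
            rw [h2]; try ring
    rw [key, ih]; try ring

lemma kstNB_ge (hk : 0 < k) (y : ℤ) : -y ≤ kstNB k e y := by
  have hkz : ((k:ℤ)) ≠ 0 := by positivity
  have step : ∀ j : Fin k, (kstT k e j - y + k - 1) = (k:ℤ) * (-(e j)) + ((kstEE k e - y - 1) + 1 + (j:ℕ)) := by
    intro j; unfold kstT; push_cast; ring
  have h1 : kstNB k e y ≥ ∑ j : Fin k, ((kstT k e j - y + k - 1) / k) :=
    Finset.sum_le_sum fun j _ => le_max_right _ _
  have h2 : ∑ j : Fin k, ((kstT k e j - y + k - 1) / k)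
      = ∑ j : Fin k, (-(e j) + ((kstEE k e - y - 1) + 1 + (j:ℕ)) / k) := by
    apply Finset.sum_congr rfl
    intro j _
    rw [step j, add_comm ((k:ℤ) * (-(e j))) _, Int.add_mul_ediv_left _ _ hkz, add_comm]
  have h3 : ∑ j : Fin k, (((kstEE k e - y - 1) + 1 + (j:ℕ)) / k) = kstEE k e - y := by
    have hh := kst_hermite (k := k) hk (kstEE k e - y - 1 + 1)
    rw [Fin.sum_univ_eq_sum_range (fun j => ((kstEE k e - y - 1) + 1 + (j:ℕ)) / k) k]
    calc ∑ j ∈ Finset.range k, ((kstEE k e - y - 1) + 1 + (j:ℕ)) / k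
        = ∑ j ∈ Finset.range k, ((kstEE k e - y - 1 + 1) + (j:ℕ)) / k := by
          apply Finset.sum_congr rfl; intro j _; ring_nf
      _ = kstEE k e - y := by rw [hh]; ring
  have h4 : ∑ j : Fin k, (-(e j) + ((kstEE k e - y - 1) + 1 + (j:ℕ)) / k)
      = -(∑ j : Fin k, e j) + (kstEE k e - y) := by
    rw [Finset.sum_add_distrib, h3, ← Finset.sum_neg_distrib]
  rw [h2, h4] at h1
  unfold kstEE at h1
  omega

end basics

section layer2
variable {k : ℕ} (e : Fin k → ℤ)

lemma kst_res_distinct (hk : 0 < k) {a b : Fin k} (h : (k:ℤ) ∣ kstT k e a - kstT k e b) : a = b := by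
  have hT : kstT k e a - kstT k e b = (k:ℤ) * (e b - e a) + (((a:ℕ):ℤ) - ((b:ℕ):ℤ)) := by
    unfold kstT; push_cast; ring
  obtain ⟨q, hq⟩ := h
  have ha : ((a:ℕ):ℤ) < k := by exact_mod_cast a.2
  have hb : ((b:ℕ):ℤ) < k := by exact_mod_cast b.2
  have ha0 : (0:ℤ) ≤ ((a:ℕ):ℤ) := by positivity
  have hb0 : (0:ℤ) ≤ ((b:ℕ):ℤ) := by positivity
  have hd : ((a:ℕ):ℤ) - ((b:ℕ):ℤ) = (k:ℤ) * (q - (e b - e a)) := by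
    rw [hT] at hq; linarith [hq]
  have : ((a:ℕ):ℤ) = ((b:ℕ):ℤ) := by
    rcases lt_trichotomy (q - (e b - e a)) 0 with h1 | h1 | h1
    · exfalso; nlinarith
    · rw [h1, mul_zero] at hd; linarith
    · exfalso; nlinarith
  exact Fin.ext (by exact_mod_cast this)

lemma kst_cover (hk : 0 < k) (z : ℤ) : ∃ j : Fin k, (k:ℤ) ∣ z - kstT k e j := by
  have hkz : (0:ℤ) < k := by exact_mod_cast hk
  set val := (z - kstEE k e - 1) % k with hval
  have h1 : 0 ≤ val := Int.emod_nonneg _ (ne_of_gt hkz)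
  have h2 : val < k := Int.emod_lt_of_pos _ hkz
  have hlt : val.toNat < k := by omega
  refine ⟨⟨val.toNat, hlt⟩, ?_⟩
  obtain ⟨d, hd⟩ : (k:ℤ) ∣ (z - kstEE k e - 1) - val := Int.dvd_self_sub_of_emod_eq rfl
  refine ⟨d + e ⟨val.toNat, hlt⟩ + 1, ?_⟩
  unfold kstT
  have hj : ((val.toNat : ℕ) : ℤ) = val := by omega
  simp only [Fin.val_mk]
  rw [hj]
  linear_combination hd

/-- membership in D via nonneg divisible difference -/
lemma kstD_iff (e : Fin k → ℤ) (x : ℤ) (hk : 0 < k) :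
    kstD k e x ↔ ∃ j : Fin k, 0 ≤ kstT k e j - x ∧ (k:ℤ) ∣ kstT k e j - x := by
  have hkz : (0:ℤ) < k := by exact_mod_cast hk
  constructor
  · rintro ⟨j, s, rfl⟩
    refine ⟨j, ?_, ⟨s, by ring⟩⟩
    have hs : kstT k e j - (kstT k e j - k * s) = (k:ℤ) * s := by ring
    rw [hs]
    positivity
  · rintro ⟨j, h0, q, hq⟩
    have hq0 : 0 ≤ q := by
      have hmm : (k:ℤ) * 0 ≤ k * q := by rw [mul_zero]; omega
      exact le_of_mul_le_mul_left hmm hkz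
    refine ⟨j, q.toNat, ?_⟩
    rw [Int.toNat_of_nonneg hq0]
    linarith

/-- per-runner step identity -/
lemma kst_per_step (hk : 0 < k) (y : ℤ) (j : Fin k) :
    max 0 ((kstT k e j - (y-1) + k - 1) / k)
      = max 0 ((kstT k e j - y + k - 1) / k)
        + (if (0 ≤ kstT k e j - y ∧ (k:ℤ) ∣ kstT k e j - y) then 1 else 0) := by
  classical
  have hkz : (0:ℤ) < k := by exact_mod_cast hk
  set a := kstT k e j - y with ha
  have hnum1 : kstT k e j - (y-1) + k - 1 = a + k := by rw [ha]; ring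
  have hdm : (k:ℤ) * (a / k) + a % k = a := Int.mul_ediv_add_emod a k
  set q := a / k with hq
  set r := a % k with hr
  have hr0 : 0 ≤ r := Int.emod_nonneg _ (ne_of_gt hkz)
  have hrk : r < k := Int.emod_lt_of_pos _ hkz
  rw [hnum1]
  by_cases hrz : r = 0
  · have hdvd : (k:ℤ) ∣ a := Int.dvd_of_emod_eq_zero hrz
    have haq : a = k * q := by omega
    have n1 : (a + k) / k = q + 1 := by
      rw [haq, show (k:ℤ) * q + k = k * (q+1) + 0 by ring]
      exact ediv_kqr hkz _ _ le_rfl hkz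
    have n2 : (a + k - 1) / k = q := by
      rw [haq, show (k:ℤ) * q + k - 1 = k * q + (k-1) by ring]
      exact ediv_kqr hkz _ _ (by omega) (by omega)
    rw [n1, n2]
    rcases le_or_gt 0 q with hq0 | hq0
    · have h0a : 0 ≤ a := by rw [haq]; positivity
      rw [if_pos ⟨h0a, hdvd⟩, max_eq_right (by omega), max_eq_right hq0]
    · have h0a : a < 0 := by nlinarith
      rw [if_neg (by intro hc; omega), max_eq_left (by omega), max_eq_left (by omega)]
      omega
  · have hdvd : ¬ (k:ℤ) ∣ a := by
      intro hc
      exact hrz (Int.emod_eq_zero_of_dvd hc)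
    have n1 : (a + k) / k = q + 1 := by
      rw [show a + k = (k:ℤ) * (q + 1) + r by linear_combination -hdm]
      exact ediv_kqr hkz _ _ hr0 hrk
    have n2 : (a + k - 1) / k = q + 1 := by
      rw [show a + k - 1 = (k:ℤ) * (q + 1) + (r - 1) by linear_combination -hdm]
      exact ediv_kqr hkz _ _ (by omega) (by omega)
    rw [n1, n2, if_neg (by intro hc; exact hdvd hc.2), add_zero]

lemma kst_indicator_sum (hk : 0 < k) (y : ℤ) :
    ∀ {c : ℤ}, (kstD k e y → c = 1) → (¬ kstD k e y → c = 0) →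
    (∑ j : Fin k, (if (0 ≤ kstT k e j - y ∧ (k:ℤ) ∣ kstT k e j - y) then (1:ℤ) else 0)) = c := by
  classical
  intro c hc1 hc0
  by_cases hD : kstD k e y
  · obtain ⟨j₀, hj₀⟩ := (kstD_iff e y hk).mp hD
    rw [hc1 hD]
    rw [Finset.sum_eq_single j₀]
    · rw [if_pos hj₀]
    · intro b _ hbne
      rw [if_neg]
      intro hb
      exact hbne (kst_res_distinct e hk (by
        have h1 := hb.2; have h2 := hj₀.2
        have : kstT k e b - kstT k e j₀ = (kstT k e b - y) - (kstT k e j₀ - y) := by ring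
        rw [this]; exact dvd_sub h1 h2))
    · intro hj; exact absurd (Finset.mem_univ j₀) hj
  · rw [hc0 hD]
    apply Finset.sum_eq_zero
    intro j _
    rw [if_neg]
    intro hj
    exact hD ((kstD_iff e y hk).mpr ⟨j, hj⟩)

lemma kstNB_step_mem (hk : 0 < k) {y : ℤ} (hD : kstD k e y) :
    kstNB k e (y - 1) = kstNB k e y + 1 := by
  classical
  unfold kstNB
  rw [Finset.sum_congr rfl (fun j _ => kst_per_step e hk y j), Finset.sum_add_distrib,
    kst_indicator_sum e hk y (fun _ => rfl) (fun hc => absurd hD hc)]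

lemma kstNB_step_not (hk : 0 < k) {y : ℤ} (hD : ¬ kstD k e y) :
    kstNB k e (y - 1) = kstNB k e y := by
  classical
  unfold kstNB
  rw [Finset.sum_congr rfl (fun j _ => kst_per_step e hk y j), Finset.sum_add_distrib,
    kst_indicator_sum e hk y (fun hc => absurd hc hD) (fun _ => rfl), add_zero]

lemma kstNB_step_le (hk : 0 < k) (y : ℤ) :
    kstNB k e (y - 1) ≤ kstNB k e y + 1 := by
  classical
  by_cases hD : kstD k e y
  · rw [kstNB_step_mem e hk hD]
  · rw [kstNB_step_not e hk hD]; omega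

end layer2

def kstNG (k : ℕ) (e : Fin k → ℤ) (y : ℤ) : ℤ := kstNB k e y + y

section layer3
variable {k : ℕ} (e : Fin k → ℤ)

lemma kstNB_CC (hk : 0 < k) (m : ℤ) :
    kstNB k e (kstC k e m) = ∑ ℓ, max 0 (-(e ℓ) - m - 1) := by
  have hkz : (0:ℤ) < k := by exact_mod_cast hk
  unfold kstNB
  apply Finset.sum_congr rfl
  intro j _
  congr 1
  have hnum : kstT k e j - kstC k e m + k - 1 = (k:ℤ) * (-(e j) - m - 1) + (j:ℕ) := by
    unfold kstT kstC; push_cast; ring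
  rw [hnum, ediv_kqr hkz _ _ (by positivity) (by exact_mod_cast j.2)]

lemma kstB_add_CC (m : ℤ) :
    (∑ ℓ, max 0 (-(e ℓ) - m - 1)) + kstC k e m = ∑ ℓ, max 0 (e ℓ + m + 1) := by
  have h1 : ∀ ℓ : Fin k, max 0 (e ℓ + m + 1) - max 0 (-(e ℓ) - m - 1) = e ℓ + m + 1 := by
    intro ℓ
    have := max_zero_sub_max_neg_zero_eq_self (e ℓ + m + 1)
    rw [max_comm, max_comm (-(e ℓ + m + 1)) 0] at this
    rw [show -(e ℓ) - m - 1 = -(e ℓ + m + 1) by ring]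
    exact this
  have h2 : ∑ ℓ : Fin k, (max 0 (e ℓ + m + 1) - max 0 (-(e ℓ) - m - 1)) = ∑ ℓ : Fin k, (e ℓ + m + 1) := by
    apply Finset.sum_congr rfl; intro ℓ _; exact h1 ℓ
  rw [Finset.sum_sub_distrib] at h2
  have h3 : ∑ ℓ : Fin k, (e ℓ + m + 1) = kstEE k e + k * (m + 1) := by
    rw [Finset.sum_add_distrib, Finset.sum_add_distrib]
    unfold kstEE
    simp [Finset.card_univ, mul_comm]
    ring
  unfold kstC
  omega

lemma kst_window (hk : 0 < k) (m : ℤ) (j : Fin k) :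
    kstD k e (kstC k e m + (j:ℕ) + 1) ↔ e j ≤ -m - 2 := by
  have hkz : (0:ℤ) < k := by exact_mod_cast hk
  constructor
  · rintro ⟨j', s, hx⟩
    have hdvd : (k:ℤ) ∣ kstT k e j - (kstC k e m + (j:ℕ) + 1) := by
      refine ⟨-(e j + m + 2), ?_⟩
      unfold kstT kstC; push_cast; ring
    have hdvd' : (k:ℤ) ∣ kstT k e j' - (kstC k e m + (j:ℕ) + 1) := ⟨s, by omega⟩
    have hjj : j' = j := kst_res_distinct e hk (by
      have : kstT k e j' - kstT k e j
          = (kstT k e j' - (kstC k e m + (j:ℕ) + 1)) - (kstT k e j - (kstC k e m + (j:ℕ) + 1)) := by ring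
      rw [this]; exact dvd_sub hdvd' hdvd)
    subst hjj
    have heq : (k:ℤ) * s = -((k:ℤ) * (e j' + m + 2)) := by
      have h2 : kstT k e j' - (kstC k e m + (j':ℕ) + 1) = -((k:ℤ) * (e j' + m + 2)) := by
        unfold kstT kstC; push_cast; ring
      omega
    have hs0 : (0:ℤ) ≤ (s:ℤ) := by positivity
    nlinarith
  · intro hle
    refine ⟨j, (-(e j) - m - 2).toNat, ?_⟩
    rw [Int.toNat_of_nonneg (by omega)]
    unfold kstT kstC; push_cast; ring

lemma kstNB_prefix (hk : 0 < k) (he : Monotone e) (m : ℤ) (i : ℕ) (hi1 : 1 ≤ i) (hik : i ≤ k)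
    (j₀ : Fin k) (hj₀ : ((j₀:ℕ)) + 1 = i) (hcase : -m - 1 ≤ e j₀) :
    kstNB k e (kstC k e m + i - 1) = kstNB k e (kstC k e (m+1)) := by
  have hkz : (0:ℤ) < k := by exact_mod_cast hk
  unfold kstNB
  apply Finset.sum_congr rfl
  intro j _
  have hjk : ((j:ℕ):ℤ) < k := by exact_mod_cast j.2
  have hterm2 : kstT k e j - kstC k e (m+1) + k - 1 = (k:ℤ) * (-(e j) - m - 2) + (j:ℕ) := by
    unfold kstT kstC; push_cast; ring
  rw [hterm2, ediv_kqr hkz _ _ (by positivity) hjk]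
  rcases le_or_gt i ((j:ℕ) + 1) with hcase2 | hcase2
  · -- j + 1 ≥ i : both sides are 0
    have hterm1 : kstT k e j - (kstC k e m + i - 1) + k - 1
        = (k:ℤ) * (-(e j) - m - 1) + (((j:ℕ) + 1 : ℤ) - i) := by
      unfold kstT kstC; push_cast; ring
    rw [hterm1, ediv_kqr hkz _ _ (by exact_mod_cast by omega) (by omega)]
    have hmono : e j₀ ≤ e j := he (by omega : j₀ ≤ j)
    rw [max_eq_left (by omega), max_eq_left (by omega)]
  · -- j + 1 < i : equal values
    have hterm1 : kstT k e j - (kstC k e m + i - 1) + k - 1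
        = (k:ℤ) * (-(e j) - m - 2) + (((j:ℕ) + 1 : ℤ) - i + k) := by
      unfold kstT kstC; push_cast; ring
    rw [hterm1, ediv_kqr hkz _ _ (by omega) (by omega)]

lemma kstNG_nonneg (hk : 0 < k) (y : ℤ) : 0 ≤ kstNG k e y := by
  have := kstNB_ge e hk y; unfold kstNG; omega

lemma kstNG_mono (hk : 0 < k) {y y' : ℤ} (h : y ≤ y') : kstNG k e y ≤ kstNG k e y' := by
  refine Int.le_induction (motive := fun z _ => kstNG k e y ≤ kstNG k e z) le_rfl (fun n _ ih => ?_) y' h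
  have hstep := kstNB_step_le e hk (n + 1)
  unfold kstNG at ih ⊢
  have hn1 : n + 1 - 1 = n := by ring
  rw [hn1] at hstep
  omega

end layer3

section layer4
variable {k : ℕ} (e : Fin k → ℤ)

lemma kst_main_iff (hk : 0 < k) (he : Monotone e) (r c : ℕ) :
    (∃ m : ℤ, ((c:ℤ)+1) ≤ ∑ ℓ, max 0 (e ℓ + m + 1) ∧ ((r:ℤ)+1) ≤ ∑ ℓ, max 0 (-(e ℓ) - m - 1))
    ↔ ((r:ℤ)+1) ≤ kstNB k e ((c:ℤ) - r) := by
  have hkz : (0:ℤ) < k := by exact_mod_cast hk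
  set y : ℤ := (c:ℤ) - r with hy
  constructor
  · rintro ⟨m, hA, hB⟩
    rcases le_or_gt y (kstC k e m) with hcase | hcase
    · have h1 : kstNB k e (kstC k e m) ≤ kstNB k e y := kstNB_antitone e hk hcase
      rw [kstNB_CC e hk m] at h1
      omega
    · have h1 : kstNG k e (kstC k e m) ≤ kstNG k e y := kstNG_mono e hk hcase.le
      unfold kstNG at h1
      rw [kstNB_CC e hk m] at h1
      have h2 := kstB_add_CC e m
      omega
  · intro hNB
    -- greatest x₀ with r + 1 ≤ NB x₀
    have hne : Nonempty (Fin k) := ⟨⟨0, hk⟩⟩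
    set bU : ℤ := Finset.univ.sup' (Finset.univ_nonempty) (kstT k e) with hbU
    have hbdd : ∀ z : ℤ, ((r:ℤ)+1) ≤ kstNB k e z → z ≤ bU := by
      intro z hz
      by_contra hzb
      push_neg at hzb
      have h0 : kstNB k e z = 0 := kstNB_eq_zero e hk (fun j => by
        have := Finset.le_sup' (kstT k e) (Finset.mem_univ j)
        omega)
      have : (0:ℤ) ≤ r := by positivity
      omega
    obtain ⟨x₀, hx₀P, hx₀max⟩ := Int.exists_greatest_of_bdd ⟨bU, hbdd⟩ ⟨y, hNB⟩
    have hyx₀ : y ≤ x₀ := hx₀max y hNB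
    have hx1 : kstNB k e (x₀ + 1) ≤ (r:ℤ) := by
      by_contra hc
      push_neg at hc
      have := hx₀max (x₀ + 1) (by omega)
      omega
    have hNBx₀ : kstNB k e x₀ = (r:ℤ) + 1 := by
      have hle : kstNB k e x₀ ≤ (r:ℤ) + 1 := by
        have := kstNB_step_le e hk (x₀ + 1)
        have h1 : x₀ + 1 - 1 = x₀ := by ring
        rw [h1] at this
        omega
      omega
    set m : ℤ := (x₀ - kstEE k e) / k - 1 with hm
    have hCm : kstC k e m = kstEE k e + k * ((x₀ - kstEE k e) / k) := by
      unfold kstC; ring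
    have hdm := Int.mul_ediv_add_emod (x₀ - kstEE k e) k
    have hmod0 : 0 ≤ (x₀ - kstEE k e) % k := Int.emod_nonneg _ (ne_of_gt hkz)
    have hmodk : (x₀ - kstEE k e) % k < k := Int.emod_lt_of_pos _ hkz
    have hCm1 : kstC k e m ≤ x₀ := by omega
    have hCm2 : x₀ < kstC k e m + k := by omega
    have hBm : ((r:ℤ)+1) ≤ ∑ ℓ, max 0 (-(e ℓ) - m - 1) := by
      have h1 : kstNB k e x₀ ≤ kstNB k e (kstC k e m) := kstNB_antitone e hk hCm1
      rw [kstNB_CC e hk m] at h1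
      omega
    refine ⟨m, ?_, hBm⟩
    -- A m ≥ c + 1 : via NG
    have hgoal : ((c:ℤ)+1) ≤ kstNG k e (kstC k e m) → ((c:ℤ)+1) ≤ ∑ ℓ, max 0 (e ℓ + m + 1) := by
      intro hg
      unfold kstNG at hg
      rw [kstNB_CC e hk m] at hg
      have h2 := kstB_add_CC e m
      omega
    apply hgoal
    unfold kstNG
    rcases le_or_gt y (kstC k e m) with hcase | hcase
    · have h1 : kstNG k e y ≤ kstNG k e (kstC k e m) := kstNG_mono e hk hcase
      unfold kstNG at h1
      omega
    · -- C m < y ≤ x₀ : no gaps between C m and x₀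
      have hCmk : kstC k e (m + 1) = kstC k e m + k := by unfold kstC; ring
      have key : ∀ i : ℕ, kstC k e m + i ≤ x₀ → kstNG k e (kstC k e m + i) = kstNG k e (kstC k e m) := by
        intro i
        induction i with
        | zero => intro _; norm_num
        | succ i ih =>
          intro hle
          have hik : (i:ℤ) + 1 < k := by omega
          have hik' : i + 1 ≤ k := by exact_mod_cast by omega
          have hikn : i < k := by omega
          set j₀ : Fin k := ⟨i, hikn⟩ with hj₀
          have hDmem : kstD k e (kstC k e m + i + 1) := by
            by_contra hD
            have hcon : -m - 1 ≤ e j₀ := by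
              by_contra hcon2
              push_neg at hcon2
              exact hD (by
                have := (kst_window e hk m j₀).mpr (by omega)
                simpa using this)
            have hpre := kstNB_prefix e hk he m (i+1) (by omega) hik' j₀ (by simp [hj₀]) hcon
            have hup : kstNB k e (kstC k e (m+1)) ≤ kstNB k e (x₀ + 1) := by
              apply kstNB_antitone e hk
              omega
            have hdn : kstNB k e x₀ ≤ kstNB k e (kstC k e m + (i+1:ℕ) - 1) := by
              apply kstNB_antitone e hk
              push_cast
              omega
            rw [hpre] at hdn
            push_cast at hdn
            omega
          have hstep := kstNB_step_mem e hk hDmem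
          have hle' : kstC k e m + i ≤ x₀ := by omega
          have ihv := ih hle'
          have harg : kstC k e m + ((i:ℕ)+1 : ℕ) = (kstC k e m + i + 1 : ℤ) := by push_cast; ring
          rw [harg]
          have harg2 : kstC k e m + (i:ℤ) + 1 - 1 = kstC k e m + i := by ring
          rw [harg2] at hstep
          unfold kstNG at ihv ⊢
          omega
      have hx₀eq : kstC k e m + ((x₀ - kstC k e m).toNat : ℤ) = x₀ := by omega
      have h1 := key (x₀ - kstC k e m).toNat (by omega)
      rw [hx₀eq] at h1
      have h2 : kstNG k e y ≤ kstNG k e x₀ := kstNG_mono e hk hyx₀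
      unfold kstNG at h1 h2
      unfold kstNG at *
      omega

end layer4

def kstb (Γ : YoungDiagram) (r : ℕ) : ℤ := (Γ.rowLen r : ℤ) - r
def kstg (Γ : YoungDiagram) (c : ℕ) : ℤ := (c:ℤ) + 1 - Γ.colLen c

section layer5
variable {k : ℕ} (e : Fin k → ℤ) (Γ : YoungDiagram)

lemma kst_cell_pos {r c : ℕ} (h : (r, c) ∈ Γ) : 1 ≤ kstb Γ r - kstg Γ c := by
  have h1 := YoungDiagram.mem_iff_lt_rowLen.mp h
  have h2 := YoungDiagram.mem_iff_lt_colLen.mp h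
  unfold kstb kstg
  omega

lemma kst_cell_neg {r c : ℕ} (h : (r, c) ∉ Γ) : kstb Γ r - kstg Γ c ≤ -1 := by
  have h1 : ¬ (c < Γ.rowLen r) := fun hc => h (YoungDiagram.mem_iff_lt_rowLen.mpr hc)
  have h2 : ¬ (r < Γ.colLen c) := fun hc => h (YoungDiagram.mem_iff_lt_colLen.mpr hc)
  unfold kstb kstg
  omega

lemma kst_hook {r c : ℕ} (h : (r, c) ∈ Γ) :
    (hookLength Γ (r, c) : ℤ) = kstb Γ r - kstg Γ c := by
  have h1 := YoungDiagram.mem_iff_lt_rowLen.mp h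
  have h2 := YoungDiagram.mem_iff_lt_colLen.mp h
  unfold hookLength kstb kstg
  simp only
  omega

variable (hk : 0 < k) (hmem : ∀ r c : ℕ, ((r, c) ∈ Γ ↔ (r:ℤ) + 1 ≤ kstNB k e ((c:ℤ) - r)))
include hk hmem

lemma kstb_NB_le (r : ℕ) : kstNB k e (kstb Γ r) ≤ r := by
  have h1 : (r, Γ.rowLen r) ∉ Γ := by
    intro hc
    exact absurd (YoungDiagram.mem_iff_lt_rowLen.mp hc) (lt_irrefl _)
  have h2 := hmem r (Γ.rowLen r)
  rw [iff_iff_implies_and_implies] at h2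
  have h3 : ¬ ((r:ℤ) + 1 ≤ kstNB k e (((Γ.rowLen r : ℕ):ℤ) - r)) := fun hc => h1 (h2.2 hc)
  have h4 : ((Γ.rowLen r : ℕ):ℤ) - r = kstb Γ r := by unfold kstb; ring
  rw [h4] at h3
  omega

lemma kstb_NB_ge (r : ℕ) : (r:ℤ) + 1 ≤ kstNB k e (kstb Γ r - 1) := by
  rcases Nat.eq_zero_or_pos (Γ.rowLen r) with h0 | h0
  · have hb : kstb Γ r - 1 = -((r:ℤ) + 1) := by unfold kstb; rw [h0]; push_cast; ring
    rw [hb]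
    have := kstNB_ge e hk (-((r:ℤ)+1))
    omega
  · have hcell : (r, Γ.rowLen r - 1) ∈ Γ := YoungDiagram.mem_iff_lt_rowLen.mpr (by omega)
    have h2 := (hmem r (Γ.rowLen r - 1)).mp hcell
    have h4 : ((Γ.rowLen r - 1 : ℕ):ℤ) - r = kstb Γ r - 1 := by unfold kstb; omega
    rw [h4] at h2
    exact h2

lemma kstb_NB_eq (r : ℕ) : kstNB k e (kstb Γ r) = r := by
  have h1 := kstb_NB_le e Γ hk hmem r
  have h2 := kstb_NB_ge e Γ hk hmem r
  have h3 := kstNB_step_le e hk (kstb Γ r)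
  omega

lemma kstb_mem_D (r : ℕ) : kstD k e (kstb Γ r) := by
  by_contra hD
  have h1 := kstNB_step_not e hk hD
  have h2 := kstb_NB_eq e Γ hk hmem r
  have h3 := kstb_NB_ge e Γ hk hmem r
  omega

lemma kstb_inv {x : ℤ} (hx : kstD k e x) : kstb Γ ((kstNB k e x).toNat) = x := by
  set r : ℕ := (kstNB k e x).toNat with hr
  have hr' : (r : ℤ) = kstNB k e x := Int.toNat_of_nonneg (kstNB_nonneg e x)
  have hstep := kstNB_step_mem e hk hx
  have h1 := kstb_NB_eq e Γ hk hmem r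
  have h2 := kstb_NB_ge e Γ hk hmem r
  rcases lt_trichotomy (kstb Γ r) x with hlt | heq | hgt
  · exfalso
    have : kstNB k e (x - 1) ≤ kstNB k e (kstb Γ r) := kstNB_antitone e hk (by omega)
    omega
  · exact heq
  · exfalso
    have : kstNB k e (kstb Γ r - 1) ≤ kstNB k e x := kstNB_antitone e hk (by omega)
    omega

lemma kstg_NB (c : ℕ) : kstNB k e (kstg Γ c - 1) = (Γ.colLen c : ℤ) := by
  have hle : kstNB k e (kstg Γ c - 1) ≤ (Γ.colLen c : ℤ) := by
    have h1 : (Γ.colLen c, c) ∉ Γ := by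
      intro hc
      exact absurd (YoungDiagram.mem_iff_lt_colLen.mp hc) (lt_irrefl _)
    have h2 := hmem (Γ.colLen c) c
    rw [iff_iff_implies_and_implies] at h2
    have h3 : ¬ (((Γ.colLen c : ℕ):ℤ) + 1 ≤ kstNB k e ((c:ℤ) - Γ.colLen c)) := fun hc => h1 (h2.2 hc)
    have h4 : (c:ℤ) - Γ.colLen c = kstg Γ c - 1 := by unfold kstg; ring
    rw [h4] at h3
    omega
  have hge : (Γ.colLen c : ℤ) ≤ kstNB k e (kstg Γ c - 1) := by
    rcases Nat.eq_zero_or_pos (Γ.colLen c) with h0 | h0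
    · rw [h0]
      exact_mod_cast kstNB_nonneg e _
    · have hcell : (Γ.colLen c - 1, c) ∈ Γ := YoungDiagram.mem_iff_lt_colLen.mpr (by omega)
      have h2 := (hmem (Γ.colLen c - 1) c).mp hcell
      have h4 : (c:ℤ) - ((Γ.colLen c - 1 : ℕ):ℤ) = kstg Γ c := by unfold kstg; omega
      rw [h4] at h2
      have h5 : kstNB k e (kstg Γ c) ≤ kstNB k e (kstg Γ c - 1) := kstNB_antitone e hk (by omega)
      omega
  omega

lemma kstg_not_D (c : ℕ) : ¬ kstD k e (kstg Γ c) := by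
  intro hD
  have h1 := kstb_inv e Γ hk hmem hD
  set r : ℕ := (kstNB k e (kstg Γ c)).toNat
  by_cases hc : (r, c) ∈ Γ
  · have := kst_cell_pos Γ hc; omega
  · have := kst_cell_neg Γ hc; omega

lemma kstg_inv {z : ℤ} (hz : ¬ kstD k e z) :
    kstg Γ ((kstNB k e (z-1) + z - 1).toNat) = z := by
  have hNG0 : 0 ≤ kstNB k e (z-1) + z - 1 := by
    have := kstNG_nonneg e hk (z-1); unfold kstNG at this; omega
  set c : ℕ := (kstNB k e (z-1) + z - 1).toNat with hc
  have hc' : (c : ℤ) = kstNB k e (z-1) + z - 1 := Int.toNat_of_nonneg hNG0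
  -- NG facts
  have hgc1 : kstNB k e (kstg Γ c - 1) + (kstg Γ c - 1) = c := by
    have := kstg_NB e Γ hk hmem c; unfold kstg at *; omega
  have hgcD : ¬ kstD k e (kstg Γ c) := kstg_not_D e Γ hk hmem c
  have hgc2 : kstNB k e (kstg Γ c) + kstg Γ c = (c:ℤ) + 1 := by
    have := kstNB_step_not e hk hgcD; omega
  have hz2 : kstNB k e (z - 1) + (z - 1) = (c:ℤ) := by omega
  have hz3 : kstNB k e z + z = (c:ℤ) + 1 := by
    have := kstNB_step_not e hk hz; omega
  rcases lt_trichotomy (kstg Γ c) z with hlt | heq | hgt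
  · exfalso
    have hm : kstNG k e (kstg Γ c) ≤ kstNG k e (z - 1) := kstNG_mono e hk (by omega)
    unfold kstNG at hm; omega
  · exact heq
  · exfalso
    have hm : kstNG k e z ≤ kstNG k e (kstg Γ c - 1) := kstNG_mono e hk (by omega)
    unfold kstNG at hm; omega

end layer5

def kstX (k : ℕ) (e : Fin k → ℤ) (j j' : Fin k) : ℤ :=
  e j' - e j - 1 + (if (j':ℕ) < (j:ℕ) then 1 else 0)
def kstx (k : ℕ) (e : Fin k → ℤ) (q : Fin k × Fin k × ℕ) : ℤ := kstT k e q.1 - k * q.2.2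
def kstz (k : ℕ) (e : Fin k → ℤ) (q : Fin k × Fin k × ℕ) : ℤ :=
  kstx k e q - 1 - (kstx k e q - 1 - kstT k e q.2.1) % k

section layer6
variable {k : ℕ} (e : Fin k → ℤ)

lemma kstQ_iff (hk : 0 < k) (he : Monotone e) (j j' : Fin k) (s : ℕ) :
    ((k:ℤ) + 1 ≤ kstT k e j - k*s - kstT k e j') ↔ (s:ℤ) < kstX k e j j' := by
  have hkz : (0:ℤ) < k := by exact_mod_cast hk
  have hTT : kstT k e j - k*s - kstT k e j'
      = (k:ℤ) * (e j' - e j - s) + (((j:ℕ):ℤ) - ((j':ℕ):ℤ)) := by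
    unfold kstT; push_cast; ring
  have hjk : ((j:ℕ):ℤ) < k := by exact_mod_cast j.2
  have hj'k : ((j':ℕ):ℤ) < k := by exact_mod_cast j'.2
  have hj0 : (0:ℤ) ≤ ((j:ℕ):ℤ) := by positivity
  have hj'0 : (0:ℤ) ≤ ((j':ℕ):ℤ) := by positivity
  have hs0 : (0:ℤ) ≤ (s:ℤ) := by positivity
  set Dd : ℤ := e j' - e j - s with hDd
  rcases lt_trichotomy ((j':ℕ):ℤ) ((j:ℕ):ℤ) with hcase | hcase | hcase
  · have hX : kstX k e j j' = e j' - e j := by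
      unfold kstX; rw [if_pos (by exact_mod_cast hcase)]; ring
    rw [hX, hTT]
    constructor
    · intro hQ
      by_contra hc
      push_neg at hc
      have hD0 : Dd ≤ 0 := by omega
      nlinarith
    · intro hlt
      have hD1 : 1 ≤ Dd := by omega
      nlinarith
  · have hjj : j = j' := Fin.ext (by exact_mod_cast hcase.symm)
    subst hjj
    have hX : kstX k e j j = -1 := by unfold kstX; rw [if_neg (lt_irrefl _)]; ring
    rw [hX, hTT]
    constructor
    · intro hQ
      exfalso
      have hD0 : Dd ≤ 0 := by omega
      nlinarith
    · intro hlt; omega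
  · have hX : kstX k e j j' = e j' - e j - 1 := by
      unfold kstX; rw [if_neg (by omega : ¬ ((j':ℕ) < (j:ℕ)))]; ring
    rw [hX, hTT]
    constructor
    · intro hQ
      by_contra hc
      push_neg at hc
      have hD0 : Dd ≤ 1 := by omega
      nlinarith
    · intro hlt
      have hD1 : 2 ≤ Dd := by omega
      nlinarith

lemma kstq_props (hk : 0 < k) (he : Monotone e) (q : Fin k × Fin k × ℕ)
    (hQ : (k:ℤ) + 1 ≤ kstT k e q.1 - k*q.2.2 - kstT k e q.2.1) :
    kstD k e (kstx k e q) ∧ ¬ kstD k e (kstz k e q) ∧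
    1 ≤ kstx k e q - kstz k e q ∧ kstx k e q - kstz k e q < k := by
  have hkz : (0:ℤ) < k := by exact_mod_cast hk
  obtain ⟨j, j', s⟩ := q
  simp only [kstx, kstz] at *
  have hne : j ≠ j' := by
    intro hjj
    have := (kstQ_iff e hk he j j' s).mp hQ
    subst hjj
    have hX : kstX k e j j = -1 := by unfold kstX; rw [if_neg (lt_irrefl _)]; ring
    rw [hX] at this
    have : (0:ℤ) ≤ s := by positivity
    omega
  set x : ℤ := kstT k e j - k * s with hx
  set w : ℤ := x - 1 - kstT k e j' with hw
  have hw0 : (k:ℤ) ≤ w := by omega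
  have hmod0 : 0 ≤ w % k := Int.emod_nonneg _ (ne_of_gt hkz)
  have hmodk : w % k < k := Int.emod_lt_of_pos _ hkz
  have hdm := Int.mul_ediv_add_emod w k
  have hq1 : 1 ≤ w / k := by
    have : (k:ℤ) * 1 + 0 ≤ k * (w / k) + w % k := by omega
    nlinarith [Int.emod_lt_of_pos w hkz]
  -- z = tt j' + k * (w / k)
  have hz_eq : x - 1 - w % k = kstT k e j' + k * (w / k) := by omega
  refine ⟨⟨j, s, rfl⟩, ?_, ?_, ?_⟩
  · rintro ⟨j'', s'', hzz⟩
    rw [hz_eq] at hzz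
    have hdvd : (k:ℤ) ∣ kstT k e j'' - kstT k e j' := ⟨w / k + s'', by linarith [hzz]⟩
    have hjj : j'' = j' := kst_res_distinct e hk hdvd
    subst hjj
    have : (k:ℤ) * (w / k) = - (k * s'') := by omega
    have hs0 : (0:ℤ) ≤ (s'':ℤ) := by positivity
    nlinarith
  · omega
  · -- x - z = 1 + w % k < k, need w % k ≠ k - 1, i.e. ¬ k ∣ x - tt j'
    have hndvd : ¬ (k:ℤ) ∣ (w + 1) := by
      intro hdvd
      have hd2 : (k:ℤ) ∣ kstT k e j - kstT k e j' := by
        have : kstT k e j - kstT k e j' = (w + 1) + (k:ℤ) * s := by omega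
        rw [this]
        exact dvd_add hdvd ⟨s, rfl⟩
      exact hne (kst_res_distinct e hk hd2)
    have : w % k ≠ k - 1 := by
      intro hmod
      apply hndvd
      have h2 : (w + 1) = k * (w / k + 1) := by linarith [hdm, hmod]
      exact ⟨_, h2⟩
    omega

lemma kstz_match (hk : 0 < k) (q : Fin k × Fin k × ℕ) {z : ℤ}
    (hres : ∃ qq : ℤ, z = kstT k e q.2.1 + k * qq)
    (h1 : 1 ≤ kstx k e q - z) (h2 : kstx k e q - z < k) :
    kstz k e q = z := by
  have hkz : (0:ℤ) < k := by exact_mod_cast hk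
  obtain ⟨qq, hqq⟩ := hres
  have harg : kstx k e q - 1 - kstT k e q.2.1 = (kstx k e q - 1 - z) + k * qq := by omega
  have hmod : (kstx k e q - 1 - kstT k e q.2.1) % k = kstx k e q - 1 - z := by
    rw [harg, Int.add_mul_emod_self_left]
    exact Int.emod_eq_of_lt (by omega) (by omega)
  unfold kstz
  omega

end layer6

/-- the number of boxes of the `k`-staircase `Γ(e)` with hook length
strictly less than `k` equals `u(e) = ∑_{e_i < e_j} (e_j − e_i − 1)`. -/
theorem kstaircase_small_hook_count_eq_u
    (k : ℕ) (hk : 1 ≤ k) (e : Fin k → ℤ) (he : Monotone e)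
    (h : ℕ → ℤ)
    (hh : ∀ n : ℕ, 1 ≤ n →
      IsGreatest {v : ℤ | ∃ m : ℤ,
        (n : ℤ) ≤ ∑ ℓ : Fin k, max 0 (e ℓ + m + 1) ∧
        v = ∑ ℓ : Fin k, max 0 (-(e ℓ) - m - 1)} (h n))
    (Γ : YoungDiagram)
    (hΓ : ∀ r c : ℕ, (r, c) ∈ Γ ↔ (r : ℤ) < h (c + 1)) :
    ((Γ.cells.filter (fun c => hookLength Γ c < k)).card : ℤ)
      = ∑ p ∈ Finset.univ.filter (fun p : Fin k × Fin k => e p.1 < e p.2),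
          (e p.2 - e p.1 - 1) := by
  classical
  have hk0 : 0 < k := hk
  have hkz : (0:ℤ) < k := by exact_mod_cast hk0
  have hmem : ∀ r c : ℕ, ((r, c) ∈ Γ ↔ (r:ℤ) + 1 ≤ kstNB k e ((c:ℤ) - r)) := by
    intro r c
    rw [hΓ r c]
    obtain ⟨⟨m₀, hm₀A, hm₀B⟩, hub⟩ := hh (c+1) (by omega)
    constructor
    · intro hr
      apply (kst_main_iff e hk0 he r c).mp
      exact ⟨m₀, by push_cast at hm₀A ⊢; omega, by omega⟩
    · intro hNB
      obtain ⟨m, hA, hB⟩ := (kst_main_iff e hk0 he r c).mpr hNB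
      have hub' : (∑ ℓ, max 0 (-(e ℓ) - m - 1)) ≤ h (c+1) :=
        hub ⟨m, by push_cast at hA ⊢; omega, rfl⟩
      omega
  set M : ℕ := Finset.univ.sup (fun j : Fin k => (e j).natAbs) with hM
  have hMe : ∀ j : Fin k, (e j).natAbs ≤ M := fun j => by
    rw [hM]; exact Finset.le_sup (f := fun j : Fin k => (e j).natAbs) (Finset.mem_univ j)
  set S₀ : ℕ := 2*M + 2 with hS₀
  set Q : Fin k × Fin k × ℕ → Prop :=
    fun q => (k:ℤ) + 1 ≤ kstT k e q.1 - k*q.2.2 - kstT k e q.2.1 with hQdef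
  set T : Finset (Fin k × Fin k × ℕ) :=
    (Finset.univ ×ˢ Finset.univ ×ˢ Finset.range S₀).filter Q with hT
  -- bijection between T and the small-hook cells
  have hbij : T.card = (Γ.cells.filter (fun c => hookLength Γ c < k)).card := by
    apply Finset.card_bij (fun q _ =>
      ((kstNB k e (kstx k e q)).toNat, (kstNB k e (kstz k e q - 1) + kstz k e q - 1).toNat))
    · -- maps into target
      intro q hq
      have hQq : Q q := (Finset.mem_filter.mp hq).2
      obtain ⟨hxD, hzD, h1, h2⟩ := kstq_props e hk0 he q hQq
      have hbx : kstb Γ ((kstNB k e (kstx k e q)).toNat) = kstx k e q :=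
        kstb_inv e Γ hk0 hmem hxD
      have hgz : kstg Γ ((kstNB k e (kstz k e q - 1) + kstz k e q - 1).toNat) = kstz k e q :=
        kstg_inv e Γ hk0 hmem hzD
      set r := (kstNB k e (kstx k e q)).toNat
      set c := (kstNB k e (kstz k e q - 1) + kstz k e q - 1).toNat
      have hcell : (r, c) ∈ Γ := by
        by_contra hnc
        have hneg := kst_cell_neg Γ hnc
        rw [hbx, hgz] at hneg
        omega
      rw [Finset.mem_filter]
      refine ⟨(YoungDiagram.mem_cells _).mpr hcell, ?_⟩
      have hhook := kst_hook Γ hcell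
      rw [hbx, hgz] at hhook
      omega
    · -- injectivity
      intro q1 hq1 q2 hq2 heq
      have hQ1 : Q q1 := (Finset.mem_filter.mp hq1).2
      have hQ2 : Q q2 := (Finset.mem_filter.mp hq2).2
      obtain ⟨hxD1, hzD1, h11, h12⟩ := kstq_props e hk0 he q1 hQ1
      obtain ⟨hxD2, hzD2, h21, h22⟩ := kstq_props e hk0 he q2 hQ2
      have e1 := kstb_inv e Γ hk0 hmem hxD1
      have e2 := kstb_inv e Γ hk0 hmem hxD2
      have g1 := kstg_inv e Γ hk0 hmem hzD1
      have g2 := kstg_inv e Γ hk0 hmem hzD2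
      have hfst : (kstNB k e (kstx k e q1)).toNat = (kstNB k e (kstx k e q2)).toNat :=
        congrArg Prod.fst heq
      have hsnd : (kstNB k e (kstz k e q1 - 1) + kstz k e q1 - 1).toNat
          = (kstNB k e (kstz k e q2 - 1) + kstz k e q2 - 1).toNat := congrArg Prod.snd heq
      have hx12 : kstx k e q1 = kstx k e q2 := by rw [← e1, ← e2, hfst]
      have hz12 : kstz k e q1 = kstz k e q2 := by rw [← g1, ← g2, hsnd]
      have hres : ∀ q : Fin k × Fin k × ℕ, ∃ d : ℤ, kstz k e q = kstT k e q.2.1 + k*d := by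
        intro q
        refine ⟨(kstx k e q - 1 - kstT k e q.2.1)/k, ?_⟩
        have hdm := Int.mul_ediv_add_emod (kstx k e q - 1 - kstT k e q.2.1) k
        unfold kstz
        omega
      obtain ⟨j1, j1', s1⟩ := q1
      obtain ⟨j2, j2', s2⟩ := q2
      have hx12' : kstT k e j1 - k*s1 = kstT k e j2 - k*s2 := hx12
      have hj12 : j1 = j2 := kst_res_distinct e hk0 ⟨(s1:ℤ) - s2, by push_cast; linarith⟩
      subst hj12
      have hs12 : s1 = s2 := by
        have : (k:ℤ) * s1 = k * s2 := by omega
        have := mul_left_cancel₀ (ne_of_gt hkz) this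
        exact_mod_cast this
      subst hs12
      obtain ⟨d1, hd1⟩ := hres (j1, j1', s1)
      obtain ⟨d2, hd2⟩ := hres (j1, j2', s1)
      have hj12' : j1' = j2' := by
        apply kst_res_distinct e hk0 (a := j1') (b := j2')
        refine ⟨d2 - d1, ?_⟩
        simp only at hd1 hd2
        rw [hz12] at hd1
        rw [hd2] at hd1
        linarith
      subst hj12'
      rfl
    · -- surjectivity
      rintro ⟨r, c⟩ hp
      rw [Finset.mem_filter] at hp
      obtain ⟨hcells, hhookp⟩ := hp
      have hcell : (r, c) ∈ Γ := (YoungDiagram.mem_cells _).mp hcells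
      set x := kstb Γ r with hxdef
      set z := kstg Γ c with hzdef
      have hxD : kstD k e x := kstb_mem_D e Γ hk0 hmem r
      have hzD : ¬ kstD k e z := kstg_not_D e Γ hk0 hmem c
      have h1 : 1 ≤ x - z := kst_cell_pos Γ hcell
      have hhookz := kst_hook Γ hcell
      have h2 : x - z < k := by omega
      obtain ⟨j, s, hxrep⟩ := hxD
      obtain ⟨j', qq, hqq⟩ := kst_cover e hk0 z
      have hqq1 : 1 ≤ qq := by
        by_contra hcq
        push_neg at hcq
        apply hzD
        refine ⟨j', (-qq).toNat, ?_⟩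
        rw [Int.toNat_of_nonneg (by omega)]
        linear_combination hqq
      have hQq : Q (j, j', s) := by
        show (k:ℤ) + 1 ≤ kstT k e j - k*s - kstT k e j'
        have hrw : kstT k e j - k*(s:ℤ) - kstT k e j' = (x - z) + k * qq := by
          rw [← hxrep]; omega
        rw [hrw]
        have hge : (k:ℤ) * 1 ≤ k * qq := by nlinarith
        omega
      have hXlt := (kstQ_iff e hk0 he j j' s).mp hQq
      have hs : s < S₀ := by
        have hb1 := hMe j
        have hb2 := hMe j'
        unfold kstX at hXlt
        split_ifs at hXlt <;> omega
      have hxq : kstx k e (j, j', s) = x := by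
        show kstT k e j - k * (s:ℤ) = x
        omega
      have hzq : kstz k e (j, j', s) = z := by
        apply kstz_match e hk0 (j, j', s) (z := z) ⟨qq, by show z = kstT k e j' + k * qq; omega⟩
        · rw [hxq]; omega
        · rw [hxq]; omega
      refine ⟨(j, j', s), ?_, ?_⟩
      · rw [hT, Finset.mem_filter]
        refine ⟨?_, hQq⟩
        simp [Finset.mem_product, Finset.mem_range, hs]
      · have hr : (kstNB k e x).toNat = r := by
          have hbeq := kstb_NB_eq e Γ hk0 hmem r
          rw [← hxdef] at hbeq
          omega
        have hcc : (kstNB k e (z - 1) + z - 1).toNat = c := by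
          have hgeq := kstg_NB e Γ hk0 hmem c
          rw [← hzdef] at hgeq
          have hzval : z = (c:ℤ) + 1 - Γ.colLen c := by rw [hzdef]; rfl
          omega
        rw [hxq, hzq, hr, hcc]
  -- counting T
  have hbound : ∀ j j' : Fin k, (kstX k e j j').toNat ≤ S₀ := by
    intro j j'
    have hb1 := hMe j
    have hb2 := hMe j'
    unfold kstX
    split_ifs <;> omega
  have hTcard : T.card = ∑ j : Fin k, ∑ j' : Fin k, (kstX k e j j').toNat := by
    rw [hT, Finset.card_filter, Finset.sum_product]
    apply Finset.sum_congr rfl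
    intro j _
    rw [Finset.sum_product]
    apply Finset.sum_congr rfl
    intro j' _
    have hcong : ∀ s ∈ Finset.range S₀,
        (if Q (j, j', s) then 1 else 0) = (if (s:ℤ) < kstX k e j j' then 1 else 0) := by
      intro s _
      congr 1
      rw [eq_iff_iff]
      exact kstQ_iff e hk0 he j j' s
    rw [Finset.sum_congr rfl hcong, ← Finset.card_filter]
    have hfil : Finset.filter (fun s : ℕ => ((s:ℕ):ℤ) < kstX k e j j') (Finset.range S₀)
        = Finset.range ((kstX k e j j').toNat) := by
      ext a
      simp only [Finset.mem_filter, Finset.mem_range]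
      have hb := hbound j j'
      omega
    rw [hfil, Finset.card_range]
  -- final identification
  have hfinal : (∑ j : Fin k, ∑ j' : Fin k, ((kstX k e j j').toNat : ℤ))
      = ∑ p ∈ Finset.univ.filter (fun p : Fin k × Fin k => e p.1 < e p.2),
          (e p.2 - e p.1 - 1) := by
    rw [Finset.sum_filter, ← Finset.univ_product_univ, Finset.sum_product]
    apply Finset.sum_congr rfl
    intro j _
    apply Finset.sum_congr rfl
    intro j' _
    rw [Int.toNat_eq_max]
    unfold kstX
    by_cases hlt : e j < e j'
    · have hnlt : ¬ ((j':ℕ) < (j:ℕ)) := by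
        intro hc
        have : e j' ≤ e j := he (le_of_lt (by exact_mod_cast hc : j' < j))
        omega
      rw [if_pos hlt, if_neg hnlt, add_zero, max_eq_left (by omega)]
    · rw [if_neg hlt]
      by_cases hjj : (j':ℕ) < (j:ℕ)
      · rw [if_pos hjj, max_eq_right (by omega)]
      · rw [if_neg hjj, max_eq_right (by omega)]
  rw [← hfinal, ← hbij, hTcard]
  push_cast
  rfl
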